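/- Let R be a commutative ring, n ≥ 3 and 1 ≤ m ≤ n−1. For 1 ≤ i ≠ j ≤ n and ξ ∈ R, the m-th exterior power of the elementary transvection t_{i,j}(ξ) is given, in the basis {e_I} of ⋀^m R^n, by ⋀^m t_{i,j}(ξ) = id + ξ·Σ_L sign(L,i)·sign(L,j)·E_{L∪{i}, L∪{j}}, where the sum ranges over all (m−1)-element subsets L of [n]∖{i,j}, E_{A,B} denotes the endomorphism sending e_B to e_A and all other basis vectors to 0, and sign(L,a) := (−1)^{#{l ∈ L : l < a}}. Equivalently, ⋀^m t_{i,j}(ξ) is the product over all such L of the transvections T_{L∪{i},L∪{j}}(sign(L,i)sign(L,j)ξ) := id + sign(L,i)sign(L,j)ξ·E_{L∪{i},L∪{j}}, and these factors pairwise commute. -/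
import Mathlib


open Matrix Finset

/-- The set of `m`-element subsets of `Fin n`, indexing the standard basis `e_I` of `⋀^m R^n`. -/
abbrev MSub (n m : ℕ) := {s : Finset (Fin n) // s.card = m}

/-- The matrix of the `m`-th exterior power `⋀^m g` of `g` in the standard basis `e_I` of
`⋀^m R^n`: its `(I, J)` entry is the `m × m` minor of `g` with rows `I` and columns `J`. -/
def extPow {R : Type*} [CommRing R] (n m : ℕ) (g : Matrix (Fin n) (Fin n) R) :
    Matrix (MSub n m) (MSub n m) R :=
  Matrix.of fun I J =>
    (Matrix.of fun a b : Fin m => g (I.1.orderEmbOfFin I.2 a) (J.1.orderEmbOfFin J.2 b)).det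

/-- `sign(L, a) = (−1)^{#{l ∈ L : l < a}}`. -/
def sgn {R : Type*} [CommRing R] {n : ℕ} (L : Finset (Fin n)) (a : Fin n) : R :=
  (-1 : R) ^ (L.filter fun l => l < a).card

/-- The endomorphism `E_{A,B}` of `⋀^m R^n` sending `e_B` to `e_A` and all other basis
vectors to `0`, written as a matrix in the basis `e_I` (zero if `A` or `B` does not have
cardinality `m`). -/
def finsetUnit (R : Type*) [CommRing R] (n m : ℕ) (A B : Finset (Fin n)) :
    Matrix (MSub n m) (MSub n m) R :=
  Matrix.of fun I J => if I.1 = A ∧ J.1 = B then 1 else 0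

/-- The transvection `T_{L∪{i},L∪{j}}(sign(L,i)·sign(L,j)·ξ)` of `⋀^m R^n`. -/
def extTransvection (R : Type*) [CommRing R] (n m : ℕ) (i j : Fin n) (ξ : R)
    (L : Finset (Fin n)) : Matrix (MSub n m) (MSub n m) R :=
  1 + (sgn L i * sgn L j * ξ) • finsetUnit R n m (insert i L) (insert j L)


lemma filter_lt_orderEmbOfFin {n k : ℕ} (s : Finset (Fin n)) (h : s.card = k) (a : Fin k) :
    (s.filter (fun x => x < s.orderEmbOfFin h a)).card = a := by
  have hinj := (s.orderEmbOfFin h).injective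
  have heq : s.filter (fun x => x < s.orderEmbOfFin h a) =
      (Finset.univ.filter (fun b : Fin k => b < a)).image (s.orderEmbOfFin h) := by
    ext x
    simp only [Finset.mem_filter, Finset.mem_image, Finset.mem_univ, true_and]
    constructor
    · rintro ⟨hxs, hx⟩
      have hr : x ∈ Set.range (s.orderEmbOfFin h) := by
        rw [Finset.range_orderEmbOfFin]; exact hxs
      obtain ⟨b, rfl⟩ := hr
      exact ⟨b, (s.orderEmbOfFin h).strictMono.lt_iff_lt.mp hx, rfl⟩
    · rintro ⟨b, hb, rfl⟩
      exact ⟨Finset.orderEmbOfFin_mem _ _ _, (s.orderEmbOfFin h).strictMono hb⟩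
  have hIio : (Finset.univ.filter (fun b : Fin k => b < a)) = Finset.Iio a := by
    ext b; simp
  rw [heq, Finset.card_image_of_injective _ hinj, hIio, Fin.card_Iio]

lemma det_pattern {R : Type*} [CommRing R] {n k : ℕ} (S T : Finset (Fin n))
    (hS : S.card = k) (hT : T.card = k) :
    (Matrix.of fun a b : Fin k =>
      if S.orderEmbOfFin hS a = T.orderEmbOfFin hT b then (1 : R) else 0).det
      = if S = T then 1 else 0 := by
  split_ifs with hST
  · subst hST
    have h1 : (Matrix.of fun a b : Fin k =>
        if S.orderEmbOfFin hS a = S.orderEmbOfFin hT b then (1 : R) else 0) = 1 := by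
      ext a b
      simp only [Matrix.of_apply, Matrix.one_apply, Finset.orderEmbOfFin_eq_orderEmbOfFin_iff]
      simp [Fin.ext_iff]
    rw [h1, Matrix.det_one]
  · have hx : ∃ x ∈ S, x ∉ T := by
      by_contra hc
      push_neg at hc
      exact hST (Finset.eq_of_subset_of_card_le hc (by rw [hS, hT]))
    obtain ⟨x, hxS, hxT⟩ := hx
    have hr : x ∈ Set.range (S.orderEmbOfFin hS) := by
      rw [Finset.range_orderEmbOfFin]; exact hxS
    obtain ⟨a, rfl⟩ := hr
    apply Matrix.det_eq_zero_of_row_eq_zero a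
    intro b
    simp only [Matrix.of_apply, ite_eq_right_iff]
    intro hab
    exact absurd (hab ▸ Finset.orderEmbOfFin_mem T hT b) hxT

lemma orderEmbOfFin_erase {n k : ℕ} (s : Finset (Fin n)) (h : s.card = k + 1) (a0 : Fin (k + 1))
    (h' : (s.erase (s.orderEmbOfFin h a0)).card = k) (b : Fin k) :
    (s.erase (s.orderEmbOfFin h a0)).orderEmbOfFin h' b = s.orderEmbOfFin h (a0.succAbove b) := by
  have := Finset.orderEmbOfFin_unique h'
    (f := fun b : Fin k => s.orderEmbOfFin h (a0.succAbove b))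
    (fun b => Finset.mem_erase.mpr
      ⟨fun hc => (a0.succAbove_ne b) ((s.orderEmbOfFin h).injective hc), Finset.orderEmbOfFin_mem _ _ _⟩)
    ((s.orderEmbOfFin h).strictMono.comp (Fin.strictMono_succAbove a0))
  exact (congrFun this b).symm

lemma orderEmbOfFin_erase' {n k : ℕ} (s : Finset (Fin n)) (h : s.card = k + 1) (a0 : Fin (k + 1))
    {x : Fin n} (hx : s.orderEmbOfFin h a0 = x) (h' : (s.erase x).card = k) (b : Fin k) :
    (s.erase x).orderEmbOfFin h' b = s.orderEmbOfFin h (a0.succAbove b) := by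
  subst hx; exact orderEmbOfFin_erase s h a0 h' b

lemma entry_det {R : Type*} [CommRing R] {n : ℕ} (m' : ℕ) (i j : Fin n) (hij : i ≠ j) (ξ : R)
    (I J : Finset (Fin n)) (hI : I.card = m' + 1) (hJ : J.card = m' + 1) :
    (Matrix.of fun a b : Fin (m' + 1) =>
        Matrix.transvection i j ξ (I.orderEmbOfFin hI a) (J.orderEmbOfFin hJ b)).det
    = (if I = J then 1 else 0)
      + ξ * (if i ∈ I ∧ j ∈ J ∧ I.erase i = J.erase j
              then sgn (I.erase i) i * sgn (I.erase i) j else (0 : R)) := by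
  set eI := I.orderEmbOfFin hI with heI
  set eJ := J.orderEmbOfFin hJ with heJ
  have hMentry : ∀ a b, Matrix.transvection i j ξ (eI a) (eJ b)
      = (if eI a = eJ b then (1:R) else 0) + ξ * ((if eI a = i then (1:R) else 0) * (if eJ b = j then 1 else 0)) := by
    intro a b
    simp only [Matrix.transvection, Matrix.add_apply, Matrix.one_apply, Matrix.single,
      Matrix.of_apply]
    congr 1
    simp only [@eq_comm _ i, @eq_comm _ j]
    by_cases h1 : eI a = i <;> by_cases h2 : eJ b = j <;> simp [h1, h2]
  by_cases hj : j ∈ J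
  · -- j ∈ J : there is a column b0 with eJ b0 = j
    have hr : j ∈ Set.range eJ := by rw [heJ, Finset.range_orderEmbOfFin]; exact hj
    obtain ⟨b0, hb0⟩ := hr
    have hcol : ∀ b, eJ b = j ↔ b = b0 := by
      intro b
      constructor
      · intro hb; exact (J.orderEmbOfFin hJ).injective (by rw [← heJ, hb, hb0])
      · rintro rfl; exact hb0
    set A : Matrix (Fin (m'+1)) (Fin (m'+1)) R :=
      Matrix.of fun a b => if eI a = eJ b then (1:R) else 0 with hA
    set u : Fin (m'+1) → R := fun a => if eI a = i then 1 else 0 with hu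
    have hM : (Matrix.of fun a b : Fin (m' + 1) =>
        Matrix.transvection i j ξ (eI a) (eJ b)) = A.updateCol b0 (fun a => A a b0 + ξ • u a) := by
      ext a b
      rw [Matrix.of_apply, hMentry a b, Matrix.updateCol_apply]
      by_cases hb : b = b0
      · subst hb
        simp [hA, hu, hb0, smul_eq_mul]
      · have : eJ b ≠ j := fun hc => hb ((hcol b).mp hc)
        simp [hA, this, smul_eq_mul, hb]
    rw [hM]
    have : (fun a => A a b0 + ξ • u a) = (fun a => A a b0) + ξ • u := rfl
    rw [this, Matrix.det_updateCol_add, Matrix.det_updateCol_smul,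
      Matrix.updateCol_eq_self, hA, det_pattern I J hI hJ]
    congr 1
    -- now: ξ * det (A.updateColumn b0 u) = ξ * if ...
    congr 1
    by_cases hi : i ∈ I
    · have hrI : i ∈ Set.range eI := by rw [heI, Finset.range_orderEmbOfFin]; exact hi
      obtain ⟨a0, ha0⟩ := hrI
      have hrow : ∀ a, eI a = i ↔ a = a0 := by
        intro a
        constructor
        · intro ha; exact (I.orderEmbOfFin hI).injective (by rw [← heI, ha, ha0])
        · rintro rfl; exact ha0
      rw [Matrix.det_succ_column _ b0]
      rw [Finset.sum_eq_single a0]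
      · have hub : (A.updateCol b0 u) a0 b0 = 1 := by
          simp [Matrix.updateCol_self, hu, ha0]
        rw [hub, mul_one]
        have hIe : (I.erase i).card = m' := by rw [Finset.card_erase_of_mem hi, hI]; omega
        have hJe : (J.erase j).card = m' := by rw [Finset.card_erase_of_mem hj, hJ]; omega
        have hminor : (A.updateCol b0 u).submatrix a0.succAbove b0.succAbove
            = Matrix.of fun a b : Fin m' =>
              if (I.erase i).orderEmbOfFin hIe a = (J.erase j).orderEmbOfFin hJe b
              then (1:R) else 0 := by
          ext a b
          have h1 : (I.erase i).orderEmbOfFin hIe a = eI (a0.succAbove a) :=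
            orderEmbOfFin_erase' I hI a0 ha0 hIe a
          have h2 : (J.erase j).orderEmbOfFin hJe b = eJ (b0.succAbove b) :=
            orderEmbOfFin_erase' J hJ b0 hb0 hJe b
          rw [Matrix.submatrix_apply, Matrix.updateCol_ne (Fin.succAbove_ne b0 b)]
          simp only [hA, Matrix.of_apply, h1, h2]
        rw [hminor, det_pattern _ _ hIe hJe]
        -- now: (-1)^(a0+b0) * (if erase = erase then 1 else 0) = if (i∈I ∧ j∈J ∧ ...) ...
        by_cases hE : I.erase i = J.erase j
        · rw [if_pos hE, if_pos ⟨hi, hj, hE⟩, mul_one]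
          have hsi : (sgn (I.erase i) i : R) = (-1 : R) ^ (a0 : ℕ) := by
            rw [sgn]
            congr 1
            have : (I.erase i).filter (fun l => l < i) = I.filter (fun x => x < i) := by
              ext x
              simp only [Finset.mem_filter, Finset.mem_erase]
              constructor
              · rintro ⟨⟨_, hx⟩, hlt⟩; exact ⟨hx, hlt⟩
              · rintro ⟨hx, hlt⟩; exact ⟨⟨ne_of_lt hlt, hx⟩, hlt⟩
            rw [this, ← ha0, heI, filter_lt_orderEmbOfFin]
          have hsj : (sgn (I.erase i) j : R) = (-1 : R) ^ (b0 : ℕ) := by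
            rw [sgn, hE]
            congr 1
            have : (J.erase j).filter (fun l => l < j) = J.filter (fun x => x < j) := by
              ext x
              simp only [Finset.mem_filter, Finset.mem_erase]
              constructor
              · rintro ⟨⟨_, hx⟩, hlt⟩; exact ⟨hx, hlt⟩
              · rintro ⟨hx, hlt⟩; exact ⟨⟨ne_of_lt hlt, hx⟩, hlt⟩
            rw [this, ← hb0, heJ, filter_lt_orderEmbOfFin]
          rw [hsi, hsj, ← pow_add]
        · rw [if_neg hE, if_neg (fun hc => hE hc.2.2), mul_zero]
      · intro a _ ha
        have : (A.updateCol b0 u) a b0 = 0 := by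
          simp only [Matrix.updateCol_self, hu]
          rw [if_neg (fun hc => ha ((hrow a).mp hc))]
        rw [this, mul_zero, zero_mul]
      · intro h; exact absurd (Finset.mem_univ a0) h
    · -- i ∉ I : column b0 of updateColumn is zero
      have hC : ¬(i ∈ I ∧ j ∈ J ∧ I.erase i = J.erase j) := fun hc => hi hc.1
      rw [if_neg hC]
      apply Matrix.det_eq_zero_of_column_eq_zero b0
      intro a
      simp only [Matrix.updateCol_self, hu]
      have : eI a ≠ i := fun hc => hi (hc ▸ Finset.orderEmbOfFin_mem I hI a)
      rw [if_neg this]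
  · -- j ∉ J : the matrix is just the pattern matrix
    have hMA : (Matrix.of fun a b : Fin (m' + 1) =>
        Matrix.transvection i j ξ (eI a) (eJ b))
        = Matrix.of fun a b => if eI a = eJ b then (1:R) else 0 := by
      ext a b
      rw [Matrix.of_apply, hMentry a b]
      have : eJ b ≠ j := fun hc => hj (hc ▸ Finset.orderEmbOfFin_mem J hJ b)
      simp [this]
    have hC : ¬(i ∈ I ∧ j ∈ J ∧ I.erase i = J.erase j) := fun hc => hj hc.2.1
    rw [hMA, det_pattern I J hI hJ, if_neg hC, mul_zero, add_zero]

lemma finsetUnit_mul {R : Type*} [CommRing R] {n m : ℕ} {A B A' B' : Finset (Fin n)}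
    (h : B ≠ A') : finsetUnit R n m A B * finsetUnit R n m A' B' = 0 := by
  ext I J
  simp only [Matrix.mul_apply, finsetUnit, Matrix.of_apply, Matrix.zero_apply]
  apply Finset.sum_eq_zero
  intro K _
  split_ifs with h1 h2
  · exact absurd (h1.2.symm.trans h2.1) h
  all_goals simp

lemma one_add_mul_one_add {M : Type*} [Ring M] (u v : M) (h : u * v = 0) :
    (1 + u) * (1 + v) = 1 + u + v := by
  rw [mul_add, mul_one, add_mul, one_mul, h, add_zero]

lemma one_add_prod {M : Type*} [Ring M] {ι : Type*} (s : Finset ι) (f : ι → M)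
    (hf : ∀ a ∈ s, ∀ b ∈ s, f a * f b = 0) :
    ∀ (hcomm : (↑s : Set ι).Pairwise fun a b => Commute (1 + f a) (1 + f b)),
      s.noncommProd (fun a => 1 + f a) hcomm = 1 + ∑ a ∈ s, f a := by
  classical
  induction s using Finset.induction_on with
  | empty => intro _; simp
  | @insert a s ha ih =>
    intro hcomm
    rw [Finset.noncommProd_insert_of_notMem _ _ _ _ ha,
      ih (fun x hx y hy => hf x (Finset.mem_insert_of_mem hx) y (Finset.mem_insert_of_mem hy)) _,
      Finset.sum_insert ha]
    have hz : f a * ∑ b ∈ s, f b = 0 := by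
      rw [Finset.mul_sum]
      exact Finset.sum_eq_zero fun b hb =>
        hf a (Finset.mem_insert_self a s) b (Finset.mem_insert_of_mem hb)
    rw [one_add_mul_one_add _ _ hz, add_assoc]


theorem exterior_power_of_transvection {R : Type*} [CommRing R] (n m : ℕ)
    (hn : 3 ≤ n) (hm1 : 1 ≤ m) (hm2 : m ≤ n - 1) (i j : Fin n) (hij : i ≠ j) (ξ : R) :
    extPow n m (Matrix.transvection i j ξ) =
        1 + ξ • ∑ L ∈ Finset.powersetCard (m - 1) (Finset.univ \ {i, j}),
          (sgn L i * sgn L j : R) • finsetUnit R n m (insert i L) (insert j L) ∧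
      (∀ L ∈ Finset.powersetCard (m - 1) ((Finset.univ : Finset (Fin n)) \ {i, j}),
        ∀ L' ∈ Finset.powersetCard (m - 1) ((Finset.univ : Finset (Fin n)) \ {i, j}),
          Commute (extTransvection R n m i j ξ L) (extTransvection R n m i j ξ L')) ∧
      ∀ (hcomm : ((Finset.powersetCard (m - 1) ((Finset.univ : Finset (Fin n)) \ {i, j}) :
            Finset (Finset (Fin n))) : Set (Finset (Fin n))).Pairwise
          fun L L' => Commute (extTransvection R n m i j ξ L) (extTransvection R n m i j ξ L')),
        extPow n m (Matrix.transvection i j ξ) =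
          (Finset.powersetCard (m - 1) ((Finset.univ : Finset (Fin n)) \ {i, j})).noncommProd
            (extTransvection R n m i j ξ) hcomm := by
  classical
  obtain ⟨m', rfl⟩ : ∃ m', m = m' + 1 := ⟨m - 1, by omega⟩
  simp only [Nat.add_sub_cancel]
  set P := Finset.powersetCard m' ((Finset.univ : Finset (Fin n)) \ {i, j}) with hP
  have hmemP : ∀ L ∈ P, i ∉ L ∧ j ∉ L ∧ L.card = m' := by
    intro L hL
    rw [hP, Finset.mem_powersetCard] at hL
    obtain ⟨hsub, hcard⟩ := hL
    refine ⟨fun hc => ?_, fun hc => ?_, hcard⟩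
    · have := hsub hc; rw [Finset.mem_sdiff] at this; exact this.2 (by simp)
    · have := hsub hc; rw [Finset.mem_sdiff] at this; exact this.2 (by simp)
  -- Part 1
  have key : extPow n (m' + 1) (Matrix.transvection i j ξ) =
      1 + ξ • ∑ L ∈ P, (sgn L i * sgn L j : R) •
        finsetUnit R n (m' + 1) (insert i L) (insert j L) := by
    ext ⟨I, hI⟩ ⟨J, hJ⟩
    have lhs : extPow n (m' + 1) (Matrix.transvection i j ξ) ⟨I, hI⟩ ⟨J, hJ⟩
        = (if I = J then 1 else 0)
          + ξ * (if i ∈ I ∧ j ∈ J ∧ I.erase i = J.erase j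
                  then sgn (I.erase i) i * sgn (I.erase i) j else (0 : R)) := by
      rw [extPow, Matrix.of_apply]
      exact entry_det m' i j hij ξ I J hI hJ
    rw [lhs]
    simp only [Matrix.add_apply, Matrix.smul_apply, Matrix.one_apply, Matrix.sum_apply,
      finsetUnit, Matrix.of_apply, smul_eq_mul, Subtype.mk.injEq]
    congr 1
    congr 1
    by_cases hC : i ∈ I ∧ j ∈ J ∧ I.erase i = J.erase j
    · obtain ⟨hi, hj, hE⟩ := hC
      rw [if_pos ⟨hi, hj, hE⟩]
      have hjI : j ∉ I := by
        intro hjI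
        have h1 : j ∈ I.erase i := Finset.mem_erase.mpr ⟨hij.symm, hjI⟩
        rw [hE] at h1
        exact (Finset.mem_erase.mp h1).1 rfl
      have hmem : I.erase i ∈ P := by
        rw [hP, Finset.mem_powersetCard]
        constructor
        · intro x hx
          rw [Finset.mem_sdiff]
          refine ⟨Finset.mem_univ x, fun hc => ?_⟩
          rcases Finset.mem_insert.mp hc with h | h
          · exact (Finset.mem_erase.mp hx).1 h
          · rw [Finset.mem_singleton] at h
            exact hjI (h ▸ (Finset.mem_erase.mp hx).2)
        · rw [Finset.card_erase_of_mem hi, hI]; omega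
      rw [Finset.sum_eq_single_of_mem (I.erase i) hmem]
      · rw [if_pos ⟨(Finset.insert_erase hi).symm, by rw [hE, Finset.insert_erase hj]⟩, mul_one]
      · intro L hL hne
        rw [if_neg, mul_zero]
        rintro ⟨h1, _⟩
        obtain ⟨hiL, _, _⟩ := hmemP L hL
        exact hne (by rw [h1, Finset.erase_insert hiL])
    · rw [if_neg hC]
      symm
      apply Finset.sum_eq_zero
      intro L hL
      rw [if_neg, mul_zero]
      rintro ⟨h1, h2⟩
      obtain ⟨hiL, hjL, _⟩ := hmemP L hL
      exact hC ⟨h1 ▸ Finset.mem_insert_self i L, h2 ▸ Finset.mem_insert_self j L,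
        by rw [h1, h2, Finset.erase_insert hiL, Finset.erase_insert hjL]⟩
  -- products of the units vanish
  have hEz : ∀ L ∈ P, ∀ L' ∈ P,
      finsetUnit R n (m' + 1) (insert i L) (insert j L) *
        finsetUnit R n (m' + 1) (insert i L') (insert j L') = 0 := by
    intro L hL L' hL'
    apply finsetUnit_mul
    intro hc
    obtain ⟨hiL, _, _⟩ := hmemP L hL
    have : i ∈ insert j L := by rw [hc]; exact Finset.mem_insert_self i L'
    rcases Finset.mem_insert.mp this with h | h
    · exact hij h
    · exact hiL h
  have hfz : ∀ L ∈ P, ∀ L' ∈ P,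
      ((sgn L i * sgn L j * ξ) • finsetUnit R n (m' + 1) (insert i L) (insert j L)) *
        ((sgn L' i * sgn L' j * ξ) • finsetUnit R n (m' + 1) (insert i L') (insert j L')) = 0 := by
    intro L hL L' hL'
    rw [smul_mul_assoc, mul_smul_comm, hEz L hL L' hL', smul_zero, smul_zero]
  -- Part 2
  have hcomm2 : ∀ L ∈ P, ∀ L' ∈ P,
      Commute (extTransvection R n (m' + 1) i j ξ L) (extTransvection R n (m' + 1) i j ξ L') := by
    intro L hL L' hL'
    show extTransvection R n (m' + 1) i j ξ L * extTransvection R n (m' + 1) i j ξ L'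
      = extTransvection R n (m' + 1) i j ξ L' * extTransvection R n (m' + 1) i j ξ L
    rw [extTransvection, extTransvection, one_add_mul_one_add _ _ (hfz L hL L' hL'),
      one_add_mul_one_add _ _ (hfz L' hL' L hL), add_right_comm]
  refine ⟨key, hcomm2, fun hcomm => ?_⟩
  -- Part 3
  rw [key]
  have hprod := one_add_prod P
    (fun L => (sgn L i * sgn L j * ξ) • finsetUnit R n (m' + 1) (insert i L) (insert j L))
    hfz
  simp only [extTransvection]
  rw [hprod]
  congr 1
  rw [Finset.smul_sum]
  apply Finset.sum_congr rfl
  intro L _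
  rw [smul_smul, mul_comm ξ]
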